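/- Pointwise heat-kernel representation: for every f : {−1,1}ⁿ → ℝ and every x ∈ {−1,1}ⁿ, f(x) − E f(ε) = ∫₀^∞ (e^{2t}−1)^{−1/2} E[ Σⱼ δ_j(t) D_j f(x·ξ(t)) ] dt, where x·ξ(t) denotes coordinatewise product. -/

import Mathlib

open Real MeasureTheory Finset

noncomputable section

/-- Sign of a boolean: `true ↦ 1`, `false ↦ -1`. -/
def sgn (b : Bool) : ℝ := if b then 1 else -1

/-- Flip the `j`-th coordinate of a point of the discrete cube `{-1,1}ⁿ`. -/
def flip' {n : ℕ} (j : Fin n) (x : Fin n → Bool) : Fin n → Bool :=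
  Function.update x j (!(x j))

/-- Discrete partial derivative `D_j f(ε) = (f(ε) - f(ε^{(j)}))/2`. -/
def D {n : ℕ} (j : Fin n) (f : (Fin n → Bool) → ℝ) : (Fin n → Bool) → ℝ :=
  fun x => (f x - f (flip' j x)) / 2

/-- `D_j` as a linear map. -/
def DL (n : ℕ) (j : Fin n) : ((Fin n → Bool) → ℝ) →ₗ[ℝ] ((Fin n → Bool) → ℝ) where
  toFun := D j
  map_add' f g := by funext x; simp [D]; ring
  map_smul' c f := by funext x; simp [D]; ring

/-- The discrete Laplacian `Δ = -∑ⱼ Dⱼ` as a continuous linear map. -/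
def Lap (n : ℕ) : ((Fin n → Bool) → ℝ) →L[ℝ] ((Fin n → Bool) → ℝ) :=
  LinearMap.toContinuousLinearMap (-(∑ j : Fin n, DL n j))

/-- The heat semigroup `P_t = e^{tΔ}` on the discrete cube. -/
def P (n : ℕ) (t : ℝ) : ((Fin n → Bool) → ℝ) →L[ℝ] ((Fin n → Bool) → ℝ) :=
  NormedSpace.exp (t • Lap n)

/-- The weight of the biased product measure: probability of `ξ(t) = ξ`. -/
def w (n : ℕ) (t : ℝ) (ξ : Fin n → Bool) : ℝ :=
  ∏ i : Fin n, (1 + Real.exp (-t) * sgn (ξ i)) / 2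

/-- The standardized variable `δ_j(t) = (ξ_j(t) - e^{-t})/√(1-e^{-2t})`. -/
def del (t : ℝ) (b : Bool) : ℝ := (sgn b - Real.exp (-t)) / Real.sqrt (1 - Real.exp (-2 * t))

/-- Coordinatewise product of two points of the cube. -/
def cmul {n : ℕ} (x ξ : Fin n → Bool) : Fin n → Bool := fun i => x i == ξ i


def W' (n : ℕ) (j : Fin n) (t : ℝ) (ξ : Fin n → Bool) : ℝ :=
  ∏ i ∈ Finset.univ.erase j, (1 + Real.exp (-t) * sgn (ξ i)) / 2

def Eterm (n : ℕ) (f : (Fin n → Bool) → ℝ) (x : Fin n → Bool) (t : ℝ) : ℝ :=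
  ∑ j : Fin n, ∑ ξ : Fin n → Bool,
    Real.exp (-t) * (sgn (ξ j) / 2 * (W' n j t ξ * f (cmul x ξ)))

def Ffun (n : ℕ) (f : (Fin n → Bool) → ℝ) (x : Fin n → Bool) (t : ℝ) : ℝ :=
  ∑ ξ : Fin n → Bool, w n t ξ * f (cmul x ξ)

lemma sgn_not (b : Bool) : sgn (!b) = -sgn b := by cases b <;> simp [sgn]

lemma flip_invol {n : ℕ} (j : Fin n) : Function.Involutive (flip' (n := n) j) := by
  intro y; funext i
  by_cases hi : i = j
  · subst hi; simp [flip']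
  · simp [flip', Function.update_of_ne hi]

lemma cmul_flip {n : ℕ} (j : Fin n) (x ξ : Fin n → Bool) :
    cmul x (flip' j ξ) = flip' j (cmul x ξ) := by
  funext i
  by_cases hi : i = j
  · subst hi; simp [cmul, flip']; cases x i <;> cases ξ i <;> rfl
  · simp [cmul, flip', Function.update_of_ne hi]

lemma D_flip {n : ℕ} (j : Fin n) (f : (Fin n → Bool) → ℝ) (y : Fin n → Bool) :
    D j f (flip' j y) = - D j f y := by
  simp only [D, flip_invol j y]; ring

lemma cmul_invol {n : ℕ} (x : Fin n → Bool) : Function.Involutive (cmul x) := by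
  intro ξ; funext i; simp only [cmul]; cases x i <;> cases ξ i <;> rfl

lemma w_split {n : ℕ} (j : Fin n) (t : ℝ) (ξ : Fin n → Bool) :
    w n t ξ = (1 + Real.exp (-t) * sgn (ξ j)) / 2 * W' n j t ξ :=
  (Finset.mul_prod_erase Finset.univ _ (Finset.mem_univ j)).symm

lemma W'_flip {n : ℕ} (j : Fin n) (t : ℝ) (ξ : Fin n → Bool) :
    W' n j t (flip' j ξ) = W' n j t ξ :=
  Finset.prod_congr rfl fun i hi => by
    rw [flip', Function.update_of_ne (Finset.ne_of_mem_erase hi)]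

lemma pair_sum {α : Type*} [Fintype α] (σ : α → α) (hσ : Function.Involutive σ)
    (h g : α → ℝ) (H : ∀ ξ, h ξ + h (σ ξ) = g ξ + g (σ ξ)) :
    ∑ ξ, h ξ = ∑ ξ, g ξ := by
  have h1 : ∑ ξ, h (σ ξ) = ∑ ξ, h ξ := Fintype.sum_bijective σ hσ.bijective _ _ (fun _ => rfl)
  have h2 : ∑ ξ, g (σ ξ) = ∑ ξ, g ξ := Fintype.sum_bijective σ hσ.bijective _ _ (fun _ => rfl)
  have h3 : ∑ ξ, (h ξ + h (σ ξ)) = ∑ ξ, (g ξ + g (σ ξ)) :=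
    Finset.sum_congr rfl (fun ξ _ => H ξ)
  rw [Finset.sum_add_distrib, Finset.sum_add_distrib, h1, h2] at h3
  linarith

lemma exp_two_lt (t : ℝ) (ht : 0 < t) : Real.exp (-2 * t) < 1 := by
  rw [← Real.exp_zero]; exact Real.exp_lt_exp.mpr (by linarith)

lemma key_j {n : ℕ} (f : (Fin n → Bool) → ℝ) (x : Fin n → Bool) (t : ℝ) (ht : 0 < t) (j : Fin n) :
    ∑ ξ : Fin n → Bool, w n t ξ * (del t (ξ j) * D j f (cmul x ξ)) =
    ∑ ξ : Fin n → Bool, Real.sqrt (1 - Real.exp (-2 * t)) *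
      (sgn (ξ j) / 2 * (W' n j t ξ * f (cmul x ξ))) := by
  have he : Real.exp (-2 * t) = Real.exp (-t) * Real.exp (-t) := by
    rw [← Real.exp_add]; ring_nf
  have hpos : 0 < 1 - Real.exp (-2 * t) := by linarith [exp_two_lt t ht]
  have hrpos : 0 < Real.sqrt (1 - Real.exp (-2 * t)) := Real.sqrt_pos.mpr hpos
  set a := Real.exp (-t) with ha
  set r := Real.sqrt (1 - Real.exp (-2 * t)) with hr
  have hr2 : r * r = 1 - a * a := by rw [hr, Real.mul_self_sqrt hpos.le, he]
  apply pair_sum (flip' j) (flip_invol j)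
  intro ξ
  have hj : (flip' j ξ) j = !(ξ j) := Function.update_self _ _ _
  rw [w_split j t ξ, w_split j t (flip' j ξ), W'_flip, cmul_flip, D_flip]
  simp only [del, D, hj, sgn_not, ← hr, ← ha]
  set s := sgn (ξ j)
  set Wv := W' n j t ξ
  set F1 := f (cmul x ξ)
  set F2 := f (flip' j (cmul x ξ))
  field_simp
  ring_nf
  linear_combination (-(2*s*Wv*F1 - 2*s*Wv*F2)) * hr2

lemma sqrt_fact (t : ℝ) (ht : 0 < t) :
    (Real.sqrt (Real.exp (2 * t) - 1))⁻¹ * Real.sqrt (1 - Real.exp (-2 * t)) = Real.exp (-t) := by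
  have hx : 0 < Real.exp (2 * t) - 1 := by
    have : Real.exp 0 < Real.exp (2 * t) := Real.exp_lt_exp.mpr (by linarith)
    simp only [Real.exp_zero] at this; linarith
  have h1 : 1 - Real.exp (-2 * t) = Real.exp (-t) * Real.exp (-t) * (Real.exp (2 * t) - 1) := by
    rw [← Real.exp_add, mul_sub, ← Real.exp_add, mul_one,
      show -t + -t + 2 * t = 0 by ring, show -t + -t = -2 * t by ring, Real.exp_zero]
  rw [h1, Real.sqrt_mul (mul_self_nonneg _), Real.sqrt_mul_self (Real.exp_pos _).le]
  have hs : Real.sqrt (Real.exp (2 * t) - 1) ≠ 0 := (Real.sqrt_pos.mpr hx).ne'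
  field_simp

lemma hasDeriv_w {n : ℕ} (ξ : Fin n → Bool) (t : ℝ) :
    HasDerivAt (fun t => w n t ξ)
      (∑ j : Fin n, W' n j t ξ * (-Real.exp (-t) * sgn (ξ j) / 2)) t := by
  have h : ∀ i ∈ (Finset.univ : Finset (Fin n)),
      HasDerivAt (fun t => (1 + Real.exp (-t) * sgn (ξ i)) / 2)
        (-Real.exp (-t) * sgn (ξ i) / 2) t := by
    intro i _
    have h1 : HasDerivAt (fun t : ℝ => Real.exp (-t)) (-Real.exp (-t)) t := by
      simpa using (hasDerivAt_neg t).exp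
    exact ((h1.mul_const (sgn (ξ i))).const_add 1).div_const 2
  have H := HasDerivAt.fun_finsetProd h
  simpa [w, W', smul_eq_mul] using H

lemma hasDeriv_F (n : ℕ) (f : (Fin n → Bool) → ℝ) (x : Fin n → Bool) (t : ℝ) :
    HasDerivAt (Ffun n f x) (-(Eterm n f x t)) t := by
  have h : HasDerivAt (Ffun n f x)
      (∑ ξ : Fin n → Bool,
        (∑ j : Fin n, W' n j t ξ * (-Real.exp (-t) * sgn (ξ j) / 2)) * f (cmul x ξ)) t :=
    HasDerivAt.fun_sum (fun ξ _ => (hasDeriv_w ξ t).mul_const _)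
  convert h using 1
  rw [Eterm, Finset.sum_comm, ← Finset.sum_neg_distrib]
  refine Finset.sum_congr rfl fun ξ _ => ?_
  rw [← Finset.sum_neg_distrib, Finset.sum_mul]
  refine Finset.sum_congr rfl fun j _ => ?_
  ring

lemma F_zero (n : ℕ) (f : (Fin n → Bool) → ℝ) (x : Fin n → Bool) : Ffun n f x 0 = f x := by
  rw [Ffun, Finset.sum_eq_single (fun _ => true)]
  · have hc : cmul x (fun _ => true) = x := funext fun i => by simp [cmul]
    rw [hc]
    have hw : w n 0 (fun _ => true) = 1 := by
      simp [w, sgn]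
    rw [hw, one_mul]
  · intro ξ _ hξ
    have : ∃ i, ξ i = false := by
      by_contra h; push_neg at h
      exact hξ (funext fun i => by simpa using h i)
    obtain ⟨i, hi⟩ := this
    rw [w, Finset.prod_eq_zero (Finset.mem_univ i), zero_mul]
    simp [hi, sgn]
  · intro h; exact absurd (Finset.mem_univ _) h

lemma F_tendsto (n : ℕ) (f : (Fin n → Bool) → ℝ) (x : Fin n → Bool) :
    Filter.Tendsto (Ffun n f x) Filter.atTop (nhds ((∑ ε : Fin n → Bool, f ε) / 2 ^ n)) := by
  have hterm : ∀ ξ : Fin n → Bool, Filter.Tendsto (fun t => w n t ξ * f (cmul x ξ))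
      Filter.atTop (nhds ((1 / 2) ^ n * f (cmul x ξ))) := by
    intro ξ
    have hw : Filter.Tendsto (fun t => w n t ξ) Filter.atTop (nhds ((1 / 2 : ℝ) ^ n)) := by
      have hfac : ∀ i : Fin n, Filter.Tendsto (fun t => (1 + Real.exp (-t) * sgn (ξ i)) / 2)
          Filter.atTop (nhds ((1 + 0 * sgn (ξ i)) / 2)) := fun i =>
        ((Real.tendsto_exp_neg_atTop_nhds_zero.mul_const _).const_add 1).div_const 2
      have := tendsto_finset_prod (Finset.univ : Finset (Fin n)) (fun i _ => hfac i)
      simpa [w] using this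
    exact hw.mul_const _
  have h := tendsto_finset_sum (Finset.univ : Finset (Fin n → Bool)) (fun ξ _ => hterm ξ)
  have hval : (∑ ξ : Fin n → Bool, (1 / 2 : ℝ) ^ n * f (cmul x ξ))
      = (∑ ε : Fin n → Bool, f ε) / 2 ^ n := by
    rw [← Finset.mul_sum]
    rw [Fintype.sum_bijective (cmul x) (cmul_invol x).bijective _ f (fun _ => rfl)]
    rw [one_div, inv_pow, mul_comm, div_eq_mul_inv]
  rw [hval] at h
  exact h

lemma Eterm_cont (n : ℕ) (f : (Fin n → Bool) → ℝ) (x : Fin n → Bool) :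
    Continuous (Eterm n f x) := by
  apply continuous_finset_sum; intro j _
  apply continuous_finset_sum; intro ξ _
  have hexp : Continuous fun t : ℝ => Real.exp (-t) := Real.continuous_exp.comp continuous_neg
  have hW : Continuous fun t => W' n j t ξ := by
    apply continuous_finset_prod; intro i _
    exact (continuous_const.add (hexp.mul continuous_const)).div_const 2
  exact hexp.mul (continuous_const.mul (hW.mul continuous_const))

lemma integrand_eq {n : ℕ} (f : (Fin n → Bool) → ℝ) (x : Fin n → Bool) (t : ℝ) (ht : 0 < t) :
    (Real.sqrt (Real.exp (2 * t) - 1))⁻¹ *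
        ∑ ξ : Fin n → Bool, w n t ξ * ∑ j : Fin n, del t (ξ j) * D j f (cmul x ξ)
      = Eterm n f x t := by
  have h1 : ∑ ξ : Fin n → Bool, w n t ξ * ∑ j : Fin n, del t (ξ j) * D j f (cmul x ξ)
      = ∑ j : Fin n, ∑ ξ : Fin n → Bool, w n t ξ * (del t (ξ j) * D j f (cmul x ξ)) := by
    simp_rw [Finset.mul_sum]
    exact Finset.sum_comm
  rw [h1]
  rw [Finset.sum_congr rfl fun j _ => key_j f x t ht j]
  rw [Eterm]
  simp_rw [← Finset.mul_sum, ← mul_assoc, sqrt_fact t ht]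

lemma Eterm_integrable (n : ℕ) (f : (Fin n → Bool) → ℝ) (x : Fin n → Bool) :
    IntegrableOn (Eterm n f x) (Set.Ioi (0:ℝ)) := by
  set C : ℝ := ∑ j : Fin n, ∑ ξ : Fin n → Bool, |f (cmul x ξ)| with hC
  have hb : IntegrableOn (fun t => C * Real.exp (-t)) (Set.Ioi (0:ℝ)) := by
    have := (exp_neg_integrableOn_Ioi 0 (zero_lt_one)).const_mul C
    simpa [IntegrableOn] using this
  apply Integrable.mono' hb ((Eterm_cont n f x).aestronglyMeasurable.restrict)
  filter_upwards [ae_restrict_mem measurableSet_Ioi] with t ht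
  have ht' : (0:ℝ) < t := ht
  have hexp : (0:ℝ) < Real.exp (-t) := Real.exp_pos _
  have hle : Real.exp (-t) ≤ 1 := by
    rw [← Real.exp_zero]; exact Real.exp_le_exp.mpr (by linarith)
  have hfac : ∀ b : Bool, 0 ≤ (1 + Real.exp (-t) * sgn b) / 2 ∧
      (1 + Real.exp (-t) * sgn b) / 2 ≤ 1 := by
    intro b; cases b <;> constructor <;> simp [sgn] <;> nlinarith
  have hWle : ∀ j (ξ : Fin n → Bool), 0 ≤ W' n j t ξ ∧ W' n j t ξ ≤ 1 := by
    intro j ξ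
    refine ⟨Finset.prod_nonneg fun i _ => (hfac (ξ i)).1,
      Finset.prod_le_one (fun i _ => (hfac (ξ i)).1) (fun i _ => (hfac (ξ i)).2)⟩
  rw [Real.norm_eq_abs]
  calc |Eterm n f x t| ≤ ∑ j : Fin n, |∑ ξ : Fin n → Bool,
        Real.exp (-t) * (sgn (ξ j) / 2 * (W' n j t ξ * f (cmul x ξ)))| :=
        Finset.abs_sum_le_sum_abs _ _
    _ ≤ ∑ j : Fin n, ∑ ξ : Fin n → Bool,
        |Real.exp (-t) * (sgn (ξ j) / 2 * (W' n j t ξ * f (cmul x ξ)))| :=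
        Finset.sum_le_sum fun j _ => Finset.abs_sum_le_sum_abs _ _
    _ ≤ ∑ j : Fin n, ∑ ξ : Fin n → Bool, Real.exp (-t) * |f (cmul x ξ)| := by
        refine Finset.sum_le_sum fun j _ => Finset.sum_le_sum fun ξ _ => ?_
        obtain ⟨hW0, hW1⟩ := hWle j ξ
        have hs : |sgn (ξ j)| = 1 := by cases ξ j <;> simp [sgn]
        rw [abs_mul, abs_mul, abs_mul, abs_div, hs, Real.abs_exp, abs_of_nonneg hW0,
          show |(2:ℝ)| = 2 from abs_of_pos two_pos]
        have h0 : (0:ℝ) ≤ |f (cmul x ξ)| := abs_nonneg _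
        have h1 : W' n j t ξ * |f (cmul x ξ)| ≤ 1 * |f (cmul x ξ)| :=
          mul_le_mul_of_nonneg_right hW1 h0
        nlinarith
    _ = C * Real.exp (-t) := by
        rw [hC, Finset.sum_mul]
        refine Finset.sum_congr rfl fun j _ => ?_
        rw [Finset.sum_mul]
        exact Finset.sum_congr rfl fun ξ _ => by ring

/-- pointwise heat-kernel representation. -/
theorem stmt8 (n : ℕ) (f : (Fin n → Bool) → ℝ) (x : Fin n → Bool) :
    f x - (∑ ε : Fin n → Bool, f ε) / 2^n =
      ∫ t in Set.Ioi (0:ℝ),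
        (Real.sqrt (Real.exp (2*t) - 1))⁻¹ *
          ∑ ξ : Fin n → Bool, w n t ξ *
            ∑ j : Fin n, del t (ξ j) * D j f (cmul x ξ) := by
  have heq : Set.EqOn (fun t => (Real.sqrt (Real.exp (2*t) - 1))⁻¹ *
      ∑ ξ : Fin n → Bool, w n t ξ * ∑ j : Fin n, del t (ξ j) * D j f (cmul x ξ))
      (Eterm n f x) (Set.Ioi 0) := fun t ht => integrand_eq f x t ht
  rw [MeasureTheory.setIntegral_congr_fun measurableSet_Ioi heq]
  have hderiv : ∀ t ∈ Set.Ici (0:ℝ), HasDerivAt (fun t => -(Ffun n f x t)) (Eterm n f x t) t :=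
    fun t _ => by have := (hasDeriv_F n f x t).neg; rw [neg_neg] at this; exact this
  have htends : Filter.Tendsto (fun t => -(Ffun n f x t)) Filter.atTop
      (nhds (-((∑ ε : Fin n → Bool, f ε) / 2 ^ n))) := (F_tendsto n f x).neg
  rw [MeasureTheory.integral_Ioi_of_hasDerivAt_of_tendsto' hderiv (Eterm_integrable n f x) htends]
  rw [F_zero n f x]
  ring

end
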